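/- Let C be a finite trivalent graph with Euler characteristic e(C) = −2 (equivalently, genus 3 when connected), and let C′ = C ∖ P where P is a set of 4 points, each lying in the interior of an edge of C and each used as a gluing point where C is trivalent. Let C̄′ denote the graph obtained by adding a vertex to each open edge end of C′. If s is the number of connected components of C′ and t is the first Betti number of C̄′, then s − t = 6; in particular, since 0 ≤ t ≤ 3, the pair (s, t) is one of (6, 0), (7, 1), (8, 2), (9, 3). -/

import Mathlib

/-- A finite multigraph with (arbitrarily) oriented edges; loops and parallel
edges are allowed.  `ends e` records the two endpoints of the edge `e`. -/
structure OMGraph where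
  V : Type
  E : Type
  [fintypeV : Fintype V]
  [fintypeE : Fintype E]
  [decEqV : DecidableEq V]
  [decEqE : DecidableEq E]
  ends : E → V × V

attribute [instance] OMGraph.fintypeV OMGraph.fintypeE OMGraph.decEqV OMGraph.decEqE

namespace OMGraph

/-- The degree of a vertex (a loop counts twice). -/
def deg (G : OMGraph) (v : G.V) : ℕ :=
  (Finset.univ.filter fun e : G.E => (G.ends e).1 = v).card +
  (Finset.univ.filter fun e : G.E => (G.ends e).2 = v).card

/-- A graph is trivalent when every vertex has degree `3`. -/
def Trivalent (G : OMGraph) : Prop := ∀ v, G.deg v = 3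

/-- Genus (first Betti number, for a connected graph) equal to `3`:  `E − V + 1 = 3`. -/
def GenusThree (G : OMGraph) : Prop :=
  (Fintype.card G.E : ℤ) - (Fintype.card G.V : ℤ) + 1 = 3

/-- Indicator vector of a set of edges, over `ℤ/2`. -/
def indicator (G : OMGraph) (S : Finset G.E) : G.E → ZMod 2 :=
  fun e => if e ∈ S then 1 else 0

/-- The mod-2 boundary map on edge chains. -/
def bnd (G : OMGraph) (f : G.E → ZMod 2) : G.V → ZMod 2 := fun v =>
  ∑ e : G.E, f e *
    ((if (G.ends e).1 = v then 1 else 0) + (if (G.ends e).2 = v then 1 else 0))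

/-- An edge set is a cycle set (element of the cycle space) when its
indicator has zero mod-2 boundary. -/
def IsCycleSet (G : OMGraph) (S : Finset G.E) : Prop :=
  G.bnd (G.indicator S) = 0

/-- A circuit: a minimal nonempty cycle set, i.e. a subgraph homeomorphic to `S¹`. -/
def IsCircuit (G : OMGraph) (S : Finset G.E) : Prop :=
  S.Nonempty ∧ G.IsCycleSet S ∧
    ∀ T ⊆ S, T.Nonempty → G.IsCycleSet T → T = S

/-- The vertex support of an edge set. -/
def verts (G : OMGraph) (S : Finset G.E) : Finset G.V :=
  S.image (fun e => (G.ends e).1) ∪ S.image (fun e => (G.ends e).2)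

/-- Adjacency of vertices. -/
def Adj (G : OMGraph) (u v : G.V) : Prop :=
  ∃ e, G.ends e = (u, v) ∨ G.ends e = (v, u)

/-- Connectedness. -/
def Connected (G : OMGraph) : Prop :=
  ∀ u v, Relation.ReflTransGen G.Adj u v

/-- Isomorphism of multigraphs (orientations of edges are irrelevant). -/
def Iso (G H : OMGraph) : Prop :=
  ∃ (φ : G.V ≃ H.V) (ψ : G.E ≃ H.E), ∀ e,
    H.ends (ψ e) = (φ (G.ends e).1, φ (G.ends e).2) ∨
    H.ends (ψ e) = (φ (G.ends e).2, φ (G.ends e).1)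

/-- The lollipop graph of genus 3: a central vertex `0` joined by bridge edges to
three vertices `1, 2, 3`, each of which carries a loop. -/
def lollipop : OMGraph where
  V := Fin 4
  E := Fin 6
  ends := fun e =>
    if h : (e : ℕ) < 3 then
      ((0 : Fin 4), (⟨(e : ℕ) + 1, by omega⟩ : Fin 4))
    else
      ((⟨(e : ℕ) - 2, by have := e.isLt; omega⟩ : Fin 4),
       (⟨(e : ℕ) - 2, by have := e.isLt; omega⟩ : Fin 4))

/-- The homology classes of `C₁, C₂, C₃` generate `H₁(G)` (the mod-2 cycle space). -/
def SpansCycleSpace (G : OMGraph) (C₁ C₂ C₃ : Finset G.E) : Prop :=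
  ∀ f : G.E → ZMod 2, G.bnd f = 0 →
    f ∈ Submodule.span (ZMod 2)
      ({G.indicator C₁, G.indicator C₂, G.indicator C₃} : Set (G.E → ZMod 2))

/-- Homological independence of three cycles. -/
def HomIndep (G : OMGraph) (C₁ C₂ C₃ : Finset G.E) : Prop :=
  LinearIndependent (ZMod 2) ![G.indicator C₁, G.indicator C₂, G.indicator C₃]

end OMGraph

namespace OMGraph

/-- The endpoint of an edge on side `b`. -/
def endAt (G : OMGraph) (e : G.E) (b : Bool) : G.V :=
  if b then (G.ends e).2 else (G.ends e).1

/-- Cutting a graph at a set `P` of vertices: each vertex `p ∈ P` is removed and each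
edge-end formerly incident to `p` is given its own new (valence-one) vertex.  This is
the graph `C̄′` obtained from `C ∖ P` by adding a vertex to each open edge end. -/
def cut (G : OMGraph) (P : Finset G.V) : OMGraph where
  V := {v : G.V // v ∉ P} ⊕ {x : G.E × Bool // G.endAt x.1 x.2 ∈ P}
  E := G.E
  ends := fun e =>
    ((if h : G.endAt e false ∈ P then Sum.inr ⟨(e, false), h⟩
        else Sum.inl ⟨G.endAt e false, h⟩),
     (if h : G.endAt e true ∈ P then Sum.inr ⟨(e, true), h⟩
        else Sum.inl ⟨G.endAt e true, h⟩))

/-- The number of connected components of a graph. -/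
noncomputable def ncomp (G : OMGraph) : ℕ := Nat.card (Quot G.Adj)

end OMGraph

open OMGraph in
/-- Lemma 5.7 of the paper: if `C` is a finite trivalent graph with Euler characteristic
`V − E = −2` (genus `3` when connected) and `P` is a set of `4` (trivalent) gluing
points, then for `C̄′ = cut C P`, the number `s` of connected components and the first
Betti number `t = E′ − V′ + s` of `C̄′` satisfy `s − t = 6`; in particular, since
`0 ≤ t ≤ 3`, the pair `(s, t)` is one of `(6,0), (7,1), (8,2), (9,3)`. -/
theorem components_betti_of_cut (C : OMGraph) (htri : C.Trivalent)
    (heuler : (Fintype.card C.V : ℤ) - (Fintype.card C.E : ℤ) = -2)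
    (P : Finset C.V) (hP : P.card = 4)
    (s t : ℤ)
    (hs : s = (ncomp (cut C P) : ℤ))
    (ht : t = (Fintype.card (cut C P).E : ℤ) - (Fintype.card (cut C P).V : ℤ)
        + (ncomp (cut C P) : ℤ)) :
    s - t = 6 ∧
    (0 ≤ t → t ≤ 3 →
      (s = 6 ∧ t = 0) ∨ (s = 7 ∧ t = 1) ∨ (s = 8 ∧ t = 2) ∨ (s = 9 ∧ t = 3)) := by
  classical
  -- edge count is unchanged
  have hE : Fintype.card (cut C P).E = Fintype.card C.E :=
    Fintype.card_congr (Equiv.refl _)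
  -- counting fibers of an edge-end map
  have h1 : ∀ (f : C.E → C.V),
      (Finset.univ.filter fun e => f e ∈ P).card
        = ∑ p ∈ P, (Finset.univ.filter fun e => f e = p).card := by
    intro f
    rw [Finset.card_eq_sum_card_fiberwise
      (f := f) (s := Finset.univ.filter fun e => f e ∈ P) (t := P)
        (fun e he => (Finset.mem_filter.mp he).2)]
    refine Finset.sum_congr rfl fun p hp => ?_
    congr 1
    rw [Finset.filter_filter]
    refine Finset.filter_congr fun e _ => ?_
    constructor
    · exact fun h => h.2
    · exact fun h => ⟨h ▸ hp, h⟩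
  -- the new valence-one vertices: split by the Bool coordinate
  have e1 : {x : C.E × Bool // C.endAt x.1 x.2 ∈ P} ≃
      {e : C.E // (C.ends e).1 ∈ P} ⊕ {e : C.E // (C.ends e).2 ∈ P} :=
    { toFun := fun x => match x with
        | ⟨(e, false), h⟩ => Sum.inl ⟨e, h⟩
        | ⟨(e, true), h⟩ => Sum.inr ⟨e, h⟩
      invFun := fun x => match x with
        | Sum.inl ⟨e, h⟩ => ⟨(e, false), h⟩
        | Sum.inr ⟨e, h⟩ => ⟨(e, true), h⟩
      left_inv := by rintro ⟨⟨e, (_ | _)⟩, h⟩ <;> rfl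
      right_inv := by rintro (⟨e, h⟩ | ⟨e, h⟩) <;> rfl }
  have hnew : Fintype.card {x : C.E × Bool // C.endAt x.1 x.2 ∈ P} = 12 := by
    rw [Fintype.card_congr e1, Fintype.card_sum,
      Fintype.card_subtype, Fintype.card_subtype, h1, h1,
      ← Finset.sum_add_distrib]
    have : ∀ p ∈ P, ((Finset.univ.filter fun e => (C.ends e).1 = p).card
        + (Finset.univ.filter fun e => (C.ends e).2 = p).card) = 3 :=
      fun p _ => htri p
    rw [Finset.sum_congr rfl this, Finset.sum_const, hP]
    rfl
  -- vertex count of the cut graph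
  have hPle : P.card ≤ Fintype.card C.V := Finset.card_le_univ P
  have hold : Fintype.card {v : C.V // v ∉ P} = Fintype.card C.V - 4 := by
    rw [Fintype.card_subtype_compl]
    congr 1
    rw [Fintype.card_coe, hP]
  have hV : Fintype.card (cut C P).V = Fintype.card C.V + 8 := by
    have : Fintype.card (cut C P).V
        = Fintype.card {v : C.V // v ∉ P}
          + Fintype.card {x : C.E × Bool // C.endAt x.1 x.2 ∈ P} :=
      (Fintype.card_congr (Equiv.refl _)).trans (Fintype.card_sum)
    rw [this, hold, hnew]
    omega
  have key : s - t = 6 := by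
    rw [hs, ht, hE, hV]
    push_cast
    omega
  exact ⟨key, fun h0 h3 => by omega⟩
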